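/- Let Ω be the 5×5 skew-symmetric matrix with upper-triangular nonzero entries Ω₁₃ = (v₀+1)(v₂+1), Ω₁₄ = -(v₀+1)(v₃+1), Ω₁₅ = (v₀+1)(1/v₂+1)(v₄+1), Ω₂₄ = (v₁+1)(v₃+1), Ω₂₅ = -(v₁+1)(v₄+1), Ω₃₅ = (v₂+1)(v₄+1). Then Ω satisfies the Jacobi identity and thus defines a Poisson bracket on the open subset of ℝ⁵ where v₂ ≠ 0. -/

import Mathlib

set_option maxHeartbeats 1000000000

open Matrix

/-- The structure matrix of the Lotka-Volterra (3,-2) reduction. -/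
noncomputable def lvOmega (v : Fin 5 → ℝ) : Matrix (Fin 5) (Fin 5) ℝ :=
  !![0, 0, (v 0 + 1)*(v 2 + 1), -((v 0 + 1)*(v 3 + 1)), (v 0 + 1)*(1/(v 2) + 1)*(v 4 + 1);
     0, 0, 0, (v 1 + 1)*(v 3 + 1), -((v 1 + 1)*(v 4 + 1));
     -((v 0 + 1)*(v 2 + 1)), 0, 0, 0, (v 2 + 1)*(v 4 + 1);
     (v 0 + 1)*(v 3 + 1), -((v 1 + 1)*(v 3 + 1)), 0, 0, 0;
     -((v 0 + 1)*(1/(v 2) + 1)*(v 4 + 1)), (v 1 + 1)*(v 4 + 1), -((v 2 + 1)*(v 4 + 1)), 0, 0]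

/-- Partial derivative of `f : (Fin 5 → ℝ) → ℝ` with respect to the `l`-th coordinate. -/
noncomputable def pd (l : Fin 5) (f : (Fin 5 → ℝ) → ℝ) (v : Fin 5 → ℝ) : ℝ :=
  deriv (fun t => f (Function.update v l t)) (v l)

theorem lv_dinv (a c x : ℝ) (h : x ≠ 0) :
    deriv (fun t : ℝ => a * (1/t + 1) * c) x = -(a*c/x^2) := by
  rw [show (fun t : ℝ => a * (1/t + 1) * c) = fun t : ℝ => (a*c) * t⁻¹ + a*c by
    funext t; field_simp]
  rw [deriv_add_const, deriv_const_mul _ (differentiableAt_inv h), deriv_inv]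
  field_simp

/-- Table of partial derivatives of the entries of `lvOmega`. -/
noncomputable def dlv (v : Fin 5 → ℝ) : Fin 5 → Matrix (Fin 5) (Fin 5) ℝ :=
  ![!![0, 0, v 2 + 1, -(v 3 + 1), (1/(v 2) + 1)*(v 4 + 1);
      0, 0, 0, 0, 0;
      -(v 2 + 1), 0, 0, 0, 0;
      v 3 + 1, 0, 0, 0, 0;
      -((1/(v 2) + 1)*(v 4 + 1)), 0, 0, 0, 0],
    !![0, 0, 0, 0, 0;
      0, 0, 0, v 3 + 1, -(v 4 + 1);
      0, 0, 0, 0, 0;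
      0, -(v 3 + 1), 0, 0, 0;
      0, v 4 + 1, 0, 0, 0],
    !![0, 0, v 0 + 1, 0, -((v 0 + 1)*(v 4 + 1)/(v 2)^2);
      0, 0, 0, 0, 0;
      -(v 0 + 1), 0, 0, 0, v 4 + 1;
      0, 0, 0, 0, 0;
      (v 0 + 1)*(v 4 + 1)/(v 2)^2, 0, -(v 4 + 1), 0, 0],
    !![0, 0, 0, -(v 0 + 1), 0;
      0, 0, 0, v 1 + 1, 0;
      0, 0, 0, 0, 0;
      v 0 + 1, -(v 1 + 1), 0, 0, 0;
      0, 0, 0, 0, 0],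
    !![0, 0, 0, 0, (v 0 + 1)*(1/(v 2) + 1);
      0, 0, 0, 0, -(v 1 + 1);
      0, 0, 0, 0, v 2 + 1;
      0, 0, 0, 0, 0;
      -((v 0 + 1)*(1/(v 2) + 1)), v 1 + 1, -(v 2 + 1), 0, 0]]

theorem pd_lv (v : Fin 5 → ℝ) (h : v 2 ≠ 0) (l j k : Fin 5) :
    pd l (fun w => lvOmega w j k) v = dlv v l j k := by
  have hl : l = 0 ∨ l = 1 ∨ l = 2 ∨ l = 3 ∨ l = 4 := by omega
  have hj : j = 0 ∨ j = 1 ∨ j = 2 ∨ j = 3 ∨ j = 4 := by omega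
  have hk : k = 0 ∨ k = 1 ∨ k = 2 ∨ k = 3 ∨ k = 4 := by omega
  rcases hl with rfl|rfl|rfl|rfl|rfl <;> rcases hj with rfl|rfl|rfl|rfl|rfl <;>
      rcases hk with rfl|rfl|rfl|rfl|rfl <;>
    · simp [pd, lvOmega, dlv, Function.update_apply, Matrix.vecHead, Matrix.vecTail,
        lv_dinv _ _ _ h]
      try ring

/-- The Lotka-Volterra structure matrix satisfies the Jacobi identity on the
open set where v₂ ≠ 0, hence defines a Poisson bracket there. -/
theorem lvOmega_jacobi (v : Fin 5 → ℝ) (h : v 2 ≠ 0) (i j k : Fin 5) :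
    ∑ l : Fin 5,
      (lvOmega v l i * pd l (fun w => lvOmega w j k) v
        + lvOmega v l j * pd l (fun w => lvOmega w k i) v
        + lvOmega v l k * pd l (fun w => lvOmega w i j) v) = 0 := by
  simp only [pd_lv v h]
  have hi : i = 0 ∨ i = 1 ∨ i = 2 ∨ i = 3 ∨ i = 4 := by omega
  have hj : j = 0 ∨ j = 1 ∨ j = 2 ∨ j = 3 ∨ j = 4 := by omega
  have hk : k = 0 ∨ k = 1 ∨ k = 2 ∨ k = 3 ∨ k = 4 := by omega
  rcases hi with rfl|rfl|rfl|rfl|rfl <;> rcases hj with rfl|rfl|rfl|rfl|rfl <;>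
      rcases hk with rfl|rfl|rfl|rfl|rfl <;>
    · simp [Fin.sum_univ_five, lvOmega, dlv, Matrix.vecHead, Matrix.vecTail]
      try field_simp
      try ring
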